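/- Let P = (1/3)·P₁ + (2/3)·P₂ where P₁ is uniform on [0,1] and P₂ is uniform on [1,2]. Then the optimal set of two-means for P is {1/2, 3/2}, with quantization error V₂ = 1/12. -/

import Mathlib

open MeasureTheory Set

noncomputable def unif (a b : ℝ) : Measure ℝ :=
  (ENNReal.ofReal (b - a))⁻¹ • (volume.restrict (Icc a b))

noncomputable def mix (p : ℝ) (P₁ P₂ : Measure ℝ) : Measure ℝ :=
  ENNReal.ofReal p • P₁ + ENNReal.ofReal (1 - p) • P₂

noncomputable def distortion (P : Measure ℝ) (γ : Finset ℝ) : ℝ :=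
  ∫ x, sInf ((fun c => (x - c) ^ 2) '' (γ : Set ℝ)) ∂P

noncomputable def quantErr (P : Measure ℝ) (n : ℕ) : ℝ :=
  sInf { v | ∃ γ : Finset ℝ, γ.Nonempty ∧ γ.card ≤ n ∧ v = distortion P γ }

def IsOptimal (P : Measure ℝ) (n : ℕ) (γ : Finset ℝ) : Prop :=
  γ.Nonempty ∧ γ.card ≤ n ∧ distortion P γ = quantErr P n

/-! ### Auxiliary integral computations -/

lemma intJ (l u m : ℝ) (h : l ≤ u) :
    ∫ x in Icc l u, (x - m) ^ 2 = ((u - m) ^ 3 - (l - m) ^ 3) / 3 := by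
  rw [integral_Icc_eq_integral_Ioc, ← intervalIntegral.integral_of_le h,
    intervalIntegral.integral_comp_sub_right (fun x => x ^ 2) m, integral_pow]
  ring

lemma intK_left (l u m : ℝ) (h : l ≤ u) (hm : m ≤ l) :
    ∫ x in Icc l u, |x - m| = (u ^ 2 - l ^ 2) / 2 - m * (u - l) := by
  have h1 : ∫ x in Icc l u, |x - m| = ∫ x in Icc l u, (x - m) := by
    apply setIntegral_congr_fun measurableSet_Icc
    intro x hx; dsimp only
    rw [abs_of_nonneg (by linarith [hx.1])]
  rw [h1, integral_Icc_eq_integral_Ioc, ← intervalIntegral.integral_of_le h,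
    intervalIntegral.integral_comp_sub_right (fun x => x) m, integral_id]
  ring

lemma intK_right (l u m : ℝ) (h : l ≤ u) (hm : u ≤ m) :
    ∫ x in Icc l u, |x - m| = m * (u - l) - (u ^ 2 - l ^ 2) / 2 := by
  have h1 : ∫ x in Icc l u, |x - m| = ∫ x in Icc l u, (m - x) := by
    apply setIntegral_congr_fun measurableSet_Icc
    intro x hx; dsimp only
    rw [abs_of_nonpos (by linarith [hx.2] : x - m ≤ 0)]; ring
  have h2 : ∫ x in Icc l u, (m - x) = ∫ x in Icc l u, (-(x - m)) := by
    apply setIntegral_congr_fun measurableSet_Icc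
    intro x _; ring
  rw [h1, h2, integral_Icc_eq_integral_Ioc, ← intervalIntegral.integral_of_le h,
    intervalIntegral.integral_neg,
    intervalIntegral.integral_comp_sub_right (fun x => x) m, integral_id]
  ring

lemma intK_mid (l u m : ℝ) (hl : l ≤ m) (hu : m ≤ u) :
    ∫ x in Icc l u, |x - m| = ((m - l) ^ 2 + (u - m) ^ 2) / 2 := by
  have hc : Continuous (fun x : ℝ => |x - m|) :=
    (continuous_id.sub continuous_const).abs
  rw [integral_Icc_eq_integral_Ioc, ← intervalIntegral.integral_of_le (hl.trans hu),
    ← intervalIntegral.integral_add_adjacent_intervals (a := l) (b := m) (c := u)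
      (hc.intervalIntegrable l m) (hc.intervalIntegrable m u)]
  have e1 : ∫ x in l..m, |x - m| = ∫ x in l..m, (m - x) := by
    apply intervalIntegral.integral_congr
    intro x hx
    rw [uIcc_of_le hl] at hx
    dsimp only
    rw [abs_of_nonpos (by linarith [hx.2] : x - m ≤ 0)]; ring
  have e2 : ∫ x in m..u, |x - m| = ∫ x in m..u, (x - m) := by
    apply intervalIntegral.integral_congr
    intro x hx
    rw [uIcc_of_le hu] at hx
    dsimp only
    rw [abs_of_nonneg (by linarith [hx.1])]
  have c1 : ∫ x in l..m, (m - x) = m * (m - l) - (m ^ 2 - l ^ 2) / 2 := by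
    rw [intervalIntegral.integral_sub (intervalIntegrable_const)
      (intervalIntegral.intervalIntegrable_id), integral_id,
      intervalIntegral.integral_const]
    simp [smul_eq_mul]; ring
  have c2 : ∫ x in m..u, (x - m) = (u ^ 2 - m ^ 2) / 2 - m * (u - m) := by
    rw [intervalIntegral.integral_sub (intervalIntegral.intervalIntegrable_id)
      (intervalIntegrable_const), integral_id, intervalIntegral.integral_const]
    simp [smul_eq_mul]; ring
  rw [e1, e2, c1, c2]; ring

lemma intF (l u m d : ℝ) (h : l ≤ u) :
    ∫ x in Icc l u, (|x - m| - d) ^ 2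
      = (∫ x in Icc l u, (x - m) ^ 2) - 2 * d * (∫ x in Icc l u, |x - m|)
        + d ^ 2 * (u - l) := by
  have hptw : ∀ x : ℝ, (|x - m| - d) ^ 2 = (x - m) ^ 2 - 2 * d * |x - m| + d ^ 2 := by
    intro x
    have : |x - m| ^ 2 = (x - m) ^ 2 := sq_abs _
    nlinarith [this]
  have hJ : IntegrableOn (fun x : ℝ => (x - m) ^ 2) (Icc l u) :=
    (((continuous_id.sub continuous_const).pow 2)).integrableOn_Icc
  have hK : IntegrableOn (fun x : ℝ => |x - m|) (Icc l u) :=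
    ((continuous_id.sub continuous_const).abs).integrableOn_Icc
  have hK' : IntegrableOn (fun x : ℝ => 2 * d * |x - m|) (Icc l u) := hK.const_mul _
  calc ∫ x in Icc l u, (|x - m| - d) ^ 2
      = ∫ x in Icc l u, ((x - m) ^ 2 - 2 * d * |x - m| + d ^ 2) := by
        apply setIntegral_congr_fun measurableSet_Icc
        intro x _; exact hptw x
    _ = (∫ x in Icc l u, ((x - m) ^ 2 - 2 * d * |x - m|)) + ∫ _x in Icc l u, d ^ 2 := by
        exact integral_add (hJ.sub hK') (integrableOn_const measure_Icc_lt_top.ne)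
    _ = (∫ x in Icc l u, (x - m) ^ 2) - (∫ x in Icc l u, 2 * d * |x - m|)
          + ∫ _x in Icc l u, d ^ 2 := by rw [integral_sub hJ hK']
    _ = _ := by
        rw [integral_const_mul, setIntegral_const, Real.volume_real_Icc_of_le h,
          smul_eq_mul]
        ring

/-! ### The mixture measure -/

lemma integral_mix (f : ℝ → ℝ) (hf : Continuous f) :
    ∫ x, f x ∂(mix (1/3) (unif 0 1) (unif 1 2)) =
      (1/3) * (∫ x in Icc (0:ℝ) 1, f x) + (2/3) * ∫ x in Icc (1:ℝ) 2, f x := by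
  have h1 : unif 0 1 = volume.restrict (Icc 0 1) := by
    unfold unif; norm_num
  have h2 : unif 1 2 = volume.restrict (Icc 1 2) := by
    unfold unif; norm_num
  have hi1 : Integrable f (ENNReal.ofReal (1/3 : ℝ) • volume.restrict (Icc (0:ℝ) 1)) :=
    (hf.integrableOn_Icc).smul_measure ENNReal.ofReal_ne_top
  have hi2 : Integrable f (ENNReal.ofReal (1 - 1/3 : ℝ) • volume.restrict (Icc (1:ℝ) 2)) :=
    (hf.integrableOn_Icc).smul_measure ENNReal.ofReal_ne_top
  unfold mix
  rw [h1, h2, integral_add_measure hi1 hi2, integral_smul_measure, integral_smul_measure,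
    ENNReal.toReal_ofReal (by norm_num : (0:ℝ) ≤ 1/3),
    ENNReal.toReal_ofReal (by norm_num : (0:ℝ) ≤ 1 - 1/3), smul_eq_mul, smul_eq_mul]
  norm_num

/-! ### Pointwise description of the distortion integrand -/

lemma min_eq_abs (x a b : ℝ) (hab : a ≤ b) :
    min ((x - a) ^ 2) ((x - b) ^ 2) = (|x - (a + b) / 2| - (b - a) / 2) ^ 2 := by
  rcases le_total x ((a + b) / 2) with h | h
  · have h1 : (x - a) ^ 2 ≤ (x - b) ^ 2 := by
      have := mul_nonneg (by linarith : (0:ℝ) ≤ b - a) (by linarith : (0:ℝ) ≤ a + b - 2 * x)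
      nlinarith [this]
    have h2 : x - (a + b) / 2 ≤ 0 := by linarith
    rw [min_eq_left h1, abs_of_nonpos h2]
    ring
  · have h1 : (x - b) ^ 2 ≤ (x - a) ^ 2 := by
      have := mul_nonneg (by linarith : (0:ℝ) ≤ b - a) (by linarith : (0:ℝ) ≤ 2 * x - a - b)
      nlinarith [this]
    have h2 : (0:ℝ) ≤ x - (a + b) / 2 := by linarith
    rw [min_eq_right h1, abs_of_nonneg h2]
    ring

lemma distortion_as (a b : ℝ) (hab : a ≤ b) (γ : Finset ℝ) (hγ : (γ : Set ℝ) = {a, b}) :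
    distortion (mix (1/3) (unif 0 1) (unif 1 2)) γ =
      (1/3) * (∫ x in Icc (0:ℝ) 1, (|x - (a + b) / 2| - (b - a) / 2) ^ 2)
      + (2/3) * ∫ x in Icc (1:ℝ) 2, (|x - (a + b) / 2| - (b - a) / 2) ^ 2 := by
  have hfun : ∀ x : ℝ, sInf ((fun c => (x - c) ^ 2) '' (γ : Set ℝ))
      = (|x - (a + b) / 2| - (b - a) / 2) ^ 2 := by
    intro x
    rw [hγ, image_pair, csInf_pair, min_eq_abs x a b hab]
  unfold distortion
  simp_rw [hfun]
  exact integral_mix _ (((continuous_id.sub continuous_const).abs.sub continuous_const).pow 2)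

/-! ### The key lower bound -/

lemma lower (m d : ℝ) :
    1/12 ≤ (1/3) * (∫ x in Icc (0:ℝ) 1, (|x - m| - d) ^ 2)
      + (2/3) * ∫ x in Icc (1:ℝ) 2, (|x - m| - d) ^ 2 := by
  rw [intF 0 1 m d (by norm_num), intF 1 2 m d (by norm_num),
    intJ 0 1 m (by norm_num), intJ 1 2 m (by norm_num)]
  rcases le_total m 0 with hm | hm
  · rw [intK_left 0 1 m (by norm_num) hm, intK_left 1 2 m (by norm_num) (by linarith)]
    nlinarith [sq_nonneg (d - (7/6 - m))]
  · rcases le_total m 1 with hm1 | hm1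
    · rw [intK_mid 0 1 m hm hm1, intK_left 1 2 m (by norm_num) hm1]
      have hx : (0:ℝ) ≤ 2 + 4 * m - m ^ 2 := by nlinarith [mul_nonneg hm (by linarith : (0:ℝ) ≤ 1 - m)]
      nlinarith [sq_nonneg (d - ((1/3) * m ^ 2 - m + 7/6)),
        mul_nonneg (sq_nonneg (m - 1)) hx]
    · rcases le_total m 2 with hm2 | hm2
      · rw [intK_right 0 1 m (by norm_num) hm1, intK_mid 1 2 m hm1 hm2]
        have hx : (0:ℝ) ≤ 1 - 2 * (m - 1) * (m - 2) := by
          nlinarith [mul_nonneg (by linarith : (0:ℝ) ≤ m - 1) (by linarith : (0:ℝ) ≤ 2 - m)]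
        nlinarith [sq_nonneg (d - ((2/3) * m ^ 2 - (5/3) * m + 3/2)),
          mul_nonneg (sq_nonneg (m - 1)) hx]
      · rw [intK_right 0 1 m (by norm_num) (by linarith), intK_right 1 2 m (by norm_num) hm2]
        nlinarith [sq_nonneg (d - (m - 7/6))]

theorem stmt4 :
    IsOptimal (mix (1/3) (unif 0 1) (unif 1 2)) 2 {1/2, 3/2} ∧
    quantErr (mix (1/3) (unif 0 1) (unif 1 2)) 2 = 1 / 12 := by
  set P := mix (1/3) (unif 0 1) (unif 1 2) with hP
  have hd : distortion P ({1/2, 3/2} : Finset ℝ) = 1/12 := by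
    rw [distortion_as (1/2) (3/2) (by norm_num) _ (by simp),
      intF 0 1 ((1/2 + 3/2)/2) ((3/2 - 1/2)/2) (by norm_num),
      intF 1 2 ((1/2 + 3/2)/2) ((3/2 - 1/2)/2) (by norm_num),
      intJ 0 1 ((1/2 + 3/2)/2) (by norm_num), intJ 1 2 ((1/2 + 3/2)/2) (by norm_num),
      intK_mid 0 1 ((1/2 + 3/2)/2) (by norm_num) (by norm_num),
      intK_mid 1 2 ((1/2 + 3/2)/2) (by norm_num) (by norm_num)]
    norm_num
  have hne : ({1/2, 3/2} : Finset ℝ).Nonempty := ⟨1/2, by simp⟩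
  have hcard : ({1/2, 3/2} : Finset ℝ).card ≤ 2 :=
    (Finset.card_insert_le _ _).trans (by simp)
  have hlb : ∀ v ∈ { v | ∃ γ : Finset ℝ, γ.Nonempty ∧ γ.card ≤ 2 ∧ v = distortion P γ },
      1/12 ≤ v := by
    rintro v ⟨γ, hγne, hγcard, rfl⟩
    have hab : ∃ a b : ℝ, a ≤ b ∧ (γ : Set ℝ) = {a, b} := by
      interval_cases h : γ.card
      · exact absurd (Finset.card_eq_zero.1 h) hγne.ne_empty
      · obtain ⟨a, ha⟩ := Finset.card_eq_one.1 h
        exact ⟨a, a, le_refl a, by rw [ha]; simp⟩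
      · obtain ⟨a, b, hab, hγ⟩ := Finset.card_eq_two.1 h
        rcases le_total a b with hle | hle
        · exact ⟨a, b, hle, by rw [hγ]; simp⟩
        · exact ⟨b, a, hle, by rw [hγ]; simp [Set.pair_comm]⟩
    obtain ⟨a, b, hle, hγ⟩ := hab
    rw [distortion_as a b hle γ hγ]
    exact lower _ _
  have hmemS : (1/12 : ℝ) ∈ { v | ∃ γ : Finset ℝ, γ.Nonempty ∧ γ.card ≤ 2 ∧ v = distortion P γ } :=
    ⟨{1/2, 3/2}, hne, hcard, hd.symm⟩
  have hQ : quantErr P 2 = 1/12 := by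
    unfold quantErr
    exact le_antisymm (csInf_le ⟨1/12, fun v hv => hlb v hv⟩ hmemS)
      (le_csInf ⟨_, hmemS⟩ hlb)
  refine ⟨⟨hne, hcard, ?_⟩, hQ⟩
  rw [hd, hQ]
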